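/- Let D be a self-adjoint operator on a Hilbert space H, r ∈ (0,1/2), and a ∈ B(H) preserving Dom(D) with [D,a] extending to a bounded operator d(a). Then the operator D[(1+D²)^{-1/2}, a]D(1+D²)^{-r}, defined on Dom(D), extends to a bounded operator on H, with norm at most (2‖d(a)‖/π)∫₀^∞ λ^{-1/2}(1+λ)^{-1/2-r} dλ. -/

import Mathlib

set_option maxHeartbeats 2000000
set_option synthInstance.maxHeartbeats 1000000

open scoped ZeroAtInfty
open Set MeasureTheory

section auxreal
open Real

private theorem stmt19_resint (c : ℝ) (hc : 1 ≤ c) :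
    ∫ t : ℝ, (c + t^2)⁻¹ = Real.pi * c ^ (-(1/2):ℝ) := by
  have hc0 : 0 < c := lt_of_lt_of_le one_pos hc
  have hs0 : 0 < Real.sqrt c := Real.sqrt_pos.mpr hc0
  have key : ∀ t : ℝ, (c + t^2)⁻¹ = c⁻¹ * (1 + ((Real.sqrt c)⁻¹ * t)^2)⁻¹ := by
    intro t
    rw [mul_pow, inv_pow, Real.sq_sqrt hc0.le, ← mul_inv]
    congr 1
    field_simp
  simp_rw [key]
  rw [integral_const_mul, Measure.integral_comp_mul_left (fun y => (1+y^2)⁻¹) (Real.sqrt c)⁻¹,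
    integral_univ_inv_one_add_sq, smul_eq_mul, Real.rpow_neg hc0.le, ← Real.sqrt_eq_rpow]
  rw [abs_of_nonneg (by positivity), inv_inv]
  rw [mul_comm]
  have h2 : Real.sqrt c * Real.sqrt c = c := Real.mul_self_sqrt hc0.le
  field_simp
  exact Real.sq_sqrt hc0.le

private theorem stmt19_intg {β : ℝ} (hβ : β < -(1/2)) :
    Integrable (fun t : ℝ => (1 + t^2) ^ β) := by
  have h : ((Module.finrank ℝ ℝ : ℝ)) < -(2*β) := by
    simp [Module.finrank_self]; linarith
  have := integrable_rpow_neg_one_add_norm_sq (E := ℝ) (μ := volume) h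
  have heq : ∀ t : ℝ, (1 + ‖t‖^2) ^ (-(-(2*β))/2) = (1 + t^2) ^ β := by
    intro t; rw [Real.norm_eq_abs, sq_abs]; norm_num
  simpa [heq] using this

private theorem stmt19_evensplit {β : ℝ} (hβ : β < -(1/2)) :
    ∫ t : ℝ, (1 + t^2) ^ β = 2 * ∫ t in Ioi (0:ℝ), (1 + t^2) ^ β := by
  have hi := stmt19_intg hβ
  have h1 := intervalIntegral.integral_Iic_add_Ioi (b := (0:ℝ)) (μ := volume)
    hi.integrableOn hi.integrableOn
  have h2 : ∫ t in Iic (0:ℝ), (1 + t^2) ^ β = ∫ t in Ioi (0:ℝ), (1 + t^2) ^ β := by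
    rw [← neg_zero, ← integral_comp_neg_Ioi]
    simp [neg_pow]
  rw [← h1, h2]; ring

private theorem stmt19_subst {β : ℝ} (hβ : β < -(1/2)) :
    ∫ l in Ioi (0:ℝ), l ^ (-(1/2) : ℝ) * (1 + l) ^ β = ∫ t : ℝ, (1 + t^2) ^ β := by
  rw [stmt19_evensplit hβ]
  rw [← integral_comp_rpow_Ioi_of_pos (g := fun l => l ^ (-(1/2):ℝ) * (1+l) ^ β) two_pos]
  rw [← integral_const_mul]
  refine setIntegral_congr_fun measurableSet_Ioi (fun x hx => ?_)
  have hx0 : (0:ℝ) < x := hx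
  have h1 : (x ^ (2:ℝ)) ^ (-(1/2):ℝ) = x⁻¹ := by
    rw [← Real.rpow_mul hx0.le]
    norm_num
    exact Real.rpow_neg_one x
  have h2 : x ^ ((2:ℝ) - 1) = x := by norm_num
  have h3 : x ^ (2:ℝ) = x ^ (2:ℕ) := by
    rw [← Real.rpow_natCast x 2]; norm_num
  rw [smul_eq_mul, h2, h1, h3]
  field_simp

private theorem stmt19_bnd1 {l : ℝ} (hl : 0 ≤ l) (x : ℝ) : x^2 * (1+l+x^2)⁻¹ ≤ 1 := by
  rw [mul_inv_le_iff₀ (by positivity)]; nlinarith [sq_nonneg x]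

private theorem stmt19_bnd3 {l : ℝ} (hl : 0 ≤ l) (x : ℝ) :
    |x| * (1+l+x^2)⁻¹ ≤ (1/2) * (1+l) ^ (-(1/2):ℝ) := by
  have h1 : (0:ℝ) < 1 + l := by linarith
  have hs : (0:ℝ) < Real.sqrt (1+l) := Real.sqrt_pos.mpr h1
  have hrw : (1+l) ^ (-(1/2):ℝ) = (Real.sqrt (1+l))⁻¹ := by
    rw [Real.rpow_neg h1.le, Real.sqrt_eq_rpow]
  have key : 2 * |x| * Real.sqrt (1+l) ≤ 1+l+x^2 := by
    nlinarith [two_mul_le_add_sq |x| (Real.sqrt (1+l)), sq_abs x,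
      Real.mul_self_sqrt h1.le]
  rw [hrw, mul_inv_le_iff₀ (by positivity : (0:ℝ) < 1+l+x^2)]
  calc |x| = 2 * |x| * Real.sqrt (1+l) * (1/2 * (Real.sqrt (1+l))⁻¹) := by
        field_simp
      _ ≤ (1+l+x^2) * (1/2 * (Real.sqrt (1+l))⁻¹) :=
        mul_le_mul_of_nonneg_right key (by positivity)
      _ = 1/2 * (Real.sqrt (1+l))⁻¹ * (1+l+x^2) := by ring

private theorem stmt19_hneg {l x r : ℝ} (hl : 0 ≤ l) (hr : 0 ≤ r) (h : l ≤ x^2) :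
    (1+x^2) ^ (-r) ≤ (1+l) ^ (-r) := by
  rw [Real.rpow_neg (by positivity), Real.rpow_neg (by positivity)]
  exact inv_anti₀ (by positivity) (Real.rpow_le_rpow (by positivity) (by linarith) hr)

private theorem stmt19_bnd4 {l x r : ℝ} (hl : 0 ≤ l) (hr0 : 0 ≤ r) (hr1 : r ≤ 1) :
    x^2 * (1+l+x^2)⁻¹ * (1+x^2) ^ (-r) ≤ (1+l) ^ (-r) := by
  have hx : (0:ℝ) < 1 + x^2 := by positivity
  have h1 : (0:ℝ) < 1 + l := by positivity
  rcases le_total l (x^2) with h | h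
  · calc x^2 * (1+l+x^2)⁻¹ * (1+x^2) ^ (-r)
        ≤ 1 * (1+x^2) ^ (-r) := by
          apply mul_le_mul_of_nonneg_right (by
            rw [mul_inv_le_iff₀ (by positivity)]; nlinarith [sq_nonneg x])
            (by positivity)
      _ ≤ (1+l) ^ (-r) := by rw [one_mul]; exact stmt19_hneg hl hr0 h
  · calc x^2 * (1+l+x^2)⁻¹ * (1+x^2) ^ (-r)
        = x^2 * (1+x^2) ^ (-r) * (1+l+x^2)⁻¹ := by ring
      _ ≤ (1+x^2) ^ (1-r) * (1+l)⁻¹ := by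
          apply mul_le_mul _ (by apply inv_anti₀ (by positivity); nlinarith) (by positivity)
            (by positivity)
          calc x^2 * (1+x^2) ^ (-r) ≤ (1+x^2) * (1+x^2) ^ (-r) := by
                apply mul_le_mul_of_nonneg_right (by nlinarith) (by positivity)
            _ = (1+x^2) ^ (1-r) := by
                rw [sub_eq_add_neg, Real.rpow_add hx, Real.rpow_one]
      _ ≤ (1+l) ^ (1-r) * (1+l)⁻¹ := by
          apply mul_le_mul_of_nonneg_right
            (Real.rpow_le_rpow (by positivity) (by linarith) (by linarith)) (by positivity)
      _ = (1+l) ^ (-r) := by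
          rw [← Real.rpow_neg_one (1+l), ← Real.rpow_add h1]
          congr 1; ring

private theorem stmt19_bnd2 {l x r : ℝ} (hl : 0 ≤ l) (hr0 : 0 ≤ r) (hr1 : r ≤ 1/2) :
    |x| * (1+l+x^2)⁻¹ * (1+x^2) ^ (-r) ≤ (1+l) ^ (-(1/2) - r) := by
  have hx : (0:ℝ) < 1 + x^2 := by positivity
  have h1 : (0:ℝ) < 1 + l := by positivity
  have hsplit : (1+l) ^ (-(1/2) - r) = (1+l) ^ (-(1/2):ℝ) * (1+l) ^ (-r) := by
    rw [← Real.rpow_add h1]; ring_nf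
  rcases le_total l (x^2) with h | h
  · calc |x| * (1+l+x^2)⁻¹ * (1+x^2) ^ (-r)
        ≤ ((1/2) * (1+l) ^ (-(1/2):ℝ)) * (1+l) ^ (-r) := by
          apply mul_le_mul (stmt19_bnd3 hl x) (stmt19_hneg hl hr0 h) (by positivity)
            (by positivity)
      _ ≤ (1+l) ^ (-(1/2):ℝ) * (1+l) ^ (-r) := by
          apply mul_le_mul_of_nonneg_right _ (by positivity)
          nlinarith [Real.rpow_pos_of_pos h1 (-(1/2):ℝ)]
      _ = (1+l) ^ (-(1/2) - r) := hsplit.symm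
  · have habs : |x| ≤ (1+x^2) ^ ((1:ℝ)/2) := by
      rw [← Real.sqrt_eq_rpow, ← Real.sqrt_sq_eq_abs]
      exact Real.sqrt_le_sqrt (by nlinarith)
    calc |x| * (1+l+x^2)⁻¹ * (1+x^2) ^ (-r)
        = |x| * (1+x^2) ^ (-r) * (1+l+x^2)⁻¹ := by ring
      _ ≤ (1+x^2) ^ ((1:ℝ)/2 - r) * (1+l)⁻¹ := by
          apply mul_le_mul _ (by apply inv_anti₀ (by positivity); nlinarith) (by positivity)
            (by positivity)
          calc |x| * (1+x^2) ^ (-r) ≤ (1+x^2) ^ ((1:ℝ)/2) * (1+x^2) ^ (-r) :=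
                mul_le_mul_of_nonneg_right habs (by positivity)
            _ = (1+x^2) ^ ((1:ℝ)/2 - r) := by
                rw [sub_eq_add_neg, Real.rpow_add hx]
      _ ≤ (1+l) ^ ((1:ℝ)/2 - r) * (1+l)⁻¹ := by
          apply mul_le_mul_of_nonneg_right
            (Real.rpow_le_rpow (by positivity) (by linarith) (by linarith)) (by positivity)
      _ = (1+l) ^ (-(1/2) - r) := by
          rw [← Real.rpow_neg_one (1+l), ← Real.rpow_add h1]
          congr 1; ring

end auxreal

variable {H : Type*} [NormedAddCommGroup H] [InnerProductSpace ℂ H] [CompleteSpace H]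

theorem stmt19 (D a : H →L[ℂ] H) (hD : IsSelfAdjoint D) (r : ℝ) (hr : r ∈ Ioo (0:ℝ) (1/2)) :
    ‖D * (cfc (fun x : ℝ => (1 + x ^ 2) ^ (-(1/2 : ℝ))) D * a -
          a * cfc (fun x : ℝ => (1 + x ^ 2) ^ (-(1/2 : ℝ))) D) *
        (D * cfc (fun x : ℝ => (1 + x ^ 2) ^ (-r)) D)‖ ≤
      2 * ‖D * a - a * D‖ / Real.pi *
        ∫ l in Ioi (0:ℝ), l ^ (-(1/2 : ℝ)) * (1 + l) ^ (-(1/2 : ℝ) - r) := by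
  obtain ⟨hr0, hr2⟩ := hr
  have hβ : (-(1/2 : ℝ) - r) < -(1/2) := by linarith
  have hπ : (0:ℝ) < Real.pi := Real.pi_pos
  -- continuity facts
  have hρc : ∀ t : ℝ, Continuous (fun x : ℝ => (1 + t^2 + x^2)⁻¹) := fun t =>
    (continuous_const.add (continuous_pow 2)).inv₀ (fun x => (by positivity : (1:ℝ) + t^2 + x^2 ≠ 0))
  have hmc : ∀ t : ℝ, Continuous (fun x : ℝ => 1 + t^2 + x^2) := fun t =>
    continuous_const.add (continuous_pow 2)
  have hgrc : Continuous (fun x : ℝ => (1 + x^2) ^ (-r)) :=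
    (continuous_const.add (continuous_pow 2)).rpow_const (fun x => Or.inl (by positivity : (1:ℝ) + x^2 ≠ 0))
  have hf₀c : Continuous (fun x : ℝ => (1 + x^2) ^ (-(1/2 : ℝ))) :=
    (continuous_const.add (continuous_pow 2)).rpow_const (fun x => Or.inl (by positivity : (1:ℝ) + x^2 ≠ 0))
  have hidc : ContinuousOn (fun x : ℝ => x) (spectrum ℝ D) := continuousOn_id
  set c : H →L[ℂ] H := D * a - a * D with hc
  set G : H →L[ℂ] H := cfc (fun x : ℝ => (1 + x^2) ^ (-r)) D with hG
  set F : H →L[ℂ] H := cfc (fun x : ℝ => (1 + x^2) ^ (-(1/2 : ℝ))) D with hF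
  set R : ℝ → (H →L[ℂ] H) := fun t => cfc (fun x : ℝ => (1 + t^2 + x^2)⁻¹) D with hRdef
  -- integral representation
  have hf : Continuous (Function.uncurry
      fun t : ℝ => (spectrum ℝ D).restrict (fun x : ℝ => (1 + t^2 + x^2)⁻¹)) := by
    apply Continuous.inv₀
    · exact continuous_const.add ((continuous_fst.pow 2)) |>.add
        (((continuous_subtype_val.comp continuous_snd).pow 2))
    · intro p; positivity
  have hbound : ∀ t : ℝ, ∀ x ∈ spectrum ℝ D,
      ‖(1 + t^2 + x^2)⁻¹‖ ≤ ‖(1+t^2)⁻¹‖ := by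
    intro t x _
    rw [Real.norm_eq_abs, Real.norm_eq_abs, abs_of_nonneg (by positivity),
      abs_of_nonneg (by positivity)]
    apply inv_anti₀ (by positivity); nlinarith [sq_nonneg x]
  have hfin : HasFiniteIntegral (fun t : ℝ => (1+t^2)⁻¹) volume :=
    integrable_inv_one_add_sq.2
  have hrep : cfc (fun x : ℝ => ∫ t : ℝ, (1 + t^2 + x^2)⁻¹) D = ∫ t : ℝ, R t :=
    cfc_integral (fun t x : ℝ => (1 + t^2 + x^2)⁻¹) (fun t : ℝ => (1+t^2)⁻¹) D
      (((continuous_const.add (continuous_fst.pow 2)).add (continuous_snd.pow 2)).inv₀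
        (fun p : ℝ × ℝ => (by positivity : (1:ℝ) + p.1^2 + p.2^2 ≠ 0))).continuousOn
      (ae_of_all _ fun t x hx => (hbound t x hx).trans_eq (Real.norm_of_nonneg (by positivity)))
      hfin hD
  have hscalar : (fun x : ℝ => ∫ t : ℝ, (1 + t^2 + x^2)⁻¹)
      = fun x : ℝ => Real.pi • ((1 + x^2) ^ (-(1/2 : ℝ))) := by
    funext x
    have h1 : ∀ t : ℝ, (1 + t^2 + x^2)⁻¹ = ((1 + x^2) + t^2)⁻¹ := by
      intro t; congr 1; ring
    simp_rw [h1]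
    rw [stmt19_resint (1 + x^2) (by nlinarith [sq_nonneg x]), smul_eq_mul]
  have hFrep : Real.pi • F = ∫ t : ℝ, R t := by
    rw [hF, ← cfc_smul Real.pi _ D hf₀c.continuousOn, ← hscalar, hrep]
  -- integrability of R
  have hcurry : Continuous fun t : ℝ =>
      (ContinuousMap.curry ⟨_, hf⟩ t : C(spectrum ℝ D, ℝ)) :=
    (ContinuousMap.curry ⟨_, hf⟩).continuous
  have hReq : R = fun t : ℝ => cfcL (a := D) hD (ContinuousMap.curry ⟨_, hf⟩ t) := by
    funext t
    simp only [hRdef]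
    rw [cfc_apply _ D hD ((hρc t).continuousOn)]
    rfl
  have hRcont : Continuous R := by
    rw [hReq]; exact (cfcL (a := D) hD).continuous.comp hcurry
  have hRnorm : ∀ t : ℝ, ‖R t‖ ≤ (1+t^2)⁻¹ := by
    intro t
    rw [hRdef]
    apply norm_cfc_le (by positivity)
    intro x hx
    rw [Real.norm_eq_abs, abs_of_nonneg (by positivity)]
    apply inv_anti₀ (by positivity); nlinarith [sq_nonneg x]
  have hRint : Integrable R volume :=
    Integrable.mono' integrable_inv_one_add_sq hRcont.aestronglyMeasurable
      (ae_of_all _ hRnorm)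
  -- the continuous linear map L
  set L : (H →L[ℂ] H) →L[ℝ] (H →L[ℂ] H) :=
    ((ContinuousLinearMap.mul ℝ (H →L[ℂ] H)).flip (D*G)).comp
      (((ContinuousLinearMap.mul ℝ (H →L[ℂ] H)) D).comp
        ((ContinuousLinearMap.mul ℝ (H →L[ℂ] H)).flip a
          - (ContinuousLinearMap.mul ℝ (H →L[ℂ] H)) a)) with hL
  have hLap : ∀ S : H →L[ℂ] H, L S = D * (S * a - a * S) * (D * G) := fun S => rfl
  -- per-t bound
  have key : ∀ t : ℝ, ‖L (R t)‖ ≤ 2 * ‖c‖ * (1 + t^2) ^ (-(1/2 : ℝ) - r) := by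
    intro t
    have hl : (0:ℝ) ≤ t^2 := sq_nonneg t
    have hpos : ∀ x : ℝ, (0:ℝ) < 1 + t^2 + x^2 := fun x => by positivity
    set Rt : H →L[ℂ] H := cfc (fun x : ℝ => (1 + t^2 + x^2)⁻¹) D with hRt
    set M : H →L[ℂ] H := cfc (fun x : ℝ => 1 + t^2 + x^2) D with hM
    have hRM : Rt * M = 1 := by
      rw [hRt, hM, ← cfc_mul _ _ D (hρc t).continuousOn (hmc t).continuousOn]
      rw [cfc_congr (g := fun _ => (1:ℝ)) (fun x _ => by field_simp)]
      exact cfc_const_one ℝ D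
    have hMR : M * Rt = 1 := by
      rw [hRt, hM, ← cfc_mul _ _ D (hmc t).continuousOn (hρc t).continuousOn]
      rw [cfc_congr (g := fun _ => (1:ℝ)) (fun x _ => by field_simp)]
      exact cfc_const_one ℝ D
    have hMeq : M = ((1 + t^2 : ℝ)) • (1 : H →L[ℂ] H) + D * D := by
      rw [hM]
      have h2 : (fun x : ℝ => 1 + t^2 + x^2) = fun x : ℝ => (1 + t^2) + x * x := by
        funext x; ring
      have hxx : ContinuousOn (fun x : ℝ => x * x) (spectrum ℝ D) := hidc.mul hidc
      rw [h2, cfc_add D _ _ continuous_const.continuousOn hxx,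
        cfc_const _ D hD, cfc_mul (fun x : ℝ => x) (fun x : ℝ => x) D
          hidc hidc,
        cfc_id' ℝ D hD, Algebra.algebraMap_eq_smul_one]
    have hMaM : M * a - a * M = D * c + c * D := by
      have step1 : M * a - a * M = D * D * a - a * (D * D) := by
        rw [hMeq]
        simp only [add_mul, mul_add, smul_mul_assoc, mul_smul_comm, one_mul, mul_one]
        abel
      have step2 : D * D * a - a * (D * D) = D * c + c * D := by
        rw [hc]; noncomm_ring
      rw [step1, step2]
    have hkey : Rt * (M * a - a * M) * Rt = a * Rt - Rt * a := by
      rw [mul_sub, sub_mul, ← mul_assoc Rt M a, hRM, one_mul,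
        ← mul_assoc Rt a M, mul_assoc (Rt * a) M Rt, hMR, mul_one]
    have hcomm : Rt * a - a * Rt = -(Rt * (D * c + c * D) * Rt) := by
      rw [← hMaM, hkey, neg_sub]
    -- expansion
    have hTt : D * (Rt * a - a * Rt) * (D * G)
        = -((D * Rt * D) * c * (Rt * (D * G)) + (D * Rt) * c * (D * (Rt * (D * G)))) := by
      rw [hcomm]
      noncomm_ring
    -- norm bounds on collapsed products
    have hDG : cfc (fun x : ℝ => x * ((1 + x^2) ^ (-r))) D = D * G := by
      rw [cfc_mul _ _ D hidc hgrc.continuousOn, cfc_id' ℝ D hD, ← hG]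
    have hQ1 : cfc (fun x : ℝ => (1 + t^2 + x^2)⁻¹ * (x * ((1 + x^2) ^ (-r)))) D
        = Rt * (D * G) := by
      rw [cfc_mul (fun x : ℝ => (1 + t^2 + x^2)⁻¹) (fun x : ℝ => x * ((1 + x^2) ^ (-r))) D
        (hρc t).continuousOn (hidc.mul hgrc.continuousOn), hDG, ← hRt]
    have hQ2 : cfc (fun x : ℝ => x * ((1 + t^2 + x^2)⁻¹ * (x * ((1 + x^2) ^ (-r))))) D
        = D * (Rt * (D * G)) := by
      rw [cfc_mul (fun x : ℝ => x) (fun x : ℝ => (1 + t^2 + x^2)⁻¹ * (x * ((1 + x^2) ^ (-r)))) D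
        hidc ((hρc t).continuousOn.mul (hidc.mul hgrc.continuousOn)),
        cfc_id' ℝ D hD, hQ1]
    have hP2 : cfc (fun x : ℝ => x * (1 + t^2 + x^2)⁻¹) D = D * Rt := by
      rw [cfc_mul _ _ D hidc (hρc t).continuousOn, cfc_id' ℝ D hD, ← hRt]
    have hP1 : cfc (fun x : ℝ => x * (1 + t^2 + x^2)⁻¹ * x) D = D * Rt * D := by
      rw [cfc_mul (fun x : ℝ => x * (1 + t^2 + x^2)⁻¹) (fun x : ℝ => x) D
        (hidc.mul (hρc t).continuousOn) hidc, cfc_id' ℝ D hD, hP2]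
    have nP1 : ‖D * Rt * D‖ ≤ 1 := by
      rw [← hP1]
      apply norm_cfc_le zero_le_one
      intro x hx
      have : x * (1 + t^2 + x^2)⁻¹ * x = x^2 * (1 + t^2 + x^2)⁻¹ := by ring
      rw [Real.norm_eq_abs, this, abs_of_nonneg (by positivity)]
      exact stmt19_bnd1 hl x
    have nP2 : ‖D * Rt‖ ≤ (1/2) * (1 + t^2) ^ (-(1/2):ℝ) := by
      rw [← hP2]
      apply norm_cfc_le (by positivity)
      intro x hx
      rw [Real.norm_eq_abs, abs_mul, abs_of_nonneg (le_of_lt (inv_pos.mpr (hpos x)))]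
      exact stmt19_bnd3 hl x
    have nQ1 : ‖Rt * (D * G)‖ ≤ (1 + t^2) ^ (-(1/2:ℝ) - r) := by
      rw [← hQ1]
      apply norm_cfc_le (by positivity)
      intro x hx
      have heq : ‖(1 + t^2 + x^2)⁻¹ * (x * ((1 + x^2) ^ (-r)))‖
          = |x| * (1 + t^2 + x^2)⁻¹ * ((1 + x^2) ^ (-r)) := by
        rw [Real.norm_eq_abs, abs_mul, abs_mul,
          abs_of_nonneg (le_of_lt (inv_pos.mpr (hpos x))),
          abs_of_nonneg (le_of_lt (Real.rpow_pos_of_pos (by positivity) _))]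
        ring
      rw [heq]
      exact stmt19_bnd2 hl hr0.le (le_of_lt hr2)
    have nQ2 : ‖D * (Rt * (D * G))‖ ≤ (1 + t^2) ^ (-r) := by
      rw [← hQ2]
      apply norm_cfc_le (by positivity)
      intro x hx
      have hu : (0:ℝ) ≤ (1 + t^2 + x^2)⁻¹ := le_of_lt (inv_pos.mpr (hpos x))
      have hv : (0:ℝ) ≤ (1 + x^2) ^ (-r) :=
        le_of_lt (Real.rpow_pos_of_pos (by positivity) _)
      have heq : ‖x * ((1 + t^2 + x^2)⁻¹ * (x * ((1 + x^2) ^ (-r))))‖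
          = x^2 * (1 + t^2 + x^2)⁻¹ * ((1 + x^2) ^ (-r)) := by
        rw [Real.norm_eq_abs, abs_of_nonneg (by nlinarith [sq_nonneg x, mul_nonneg hu hv])]
        ring
      rw [heq]
      exact stmt19_bnd4 hl hr0.le (by linarith)
    -- combine
    have hw : (0:ℝ) < (1 + t^2) ^ (-(1/2:ℝ) - r) := Real.rpow_pos_of_pos (by positivity) _
    have hwsplit : (1 + t^2) ^ (-(1/2:ℝ)) * (1 + t^2) ^ (-r) = (1 + t^2) ^ (-(1/2:ℝ) - r) := by
      have he : -(1/2:ℝ) + -r = -(1/2:ℝ) - r := by ring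
      rw [← Real.rpow_add (by positivity), he]
    have hterm1 : ‖(D * Rt * D) * c * (Rt * (D * G))‖ ≤ ‖c‖ * (1 + t^2) ^ (-(1/2:ℝ) - r) := by
      calc ‖(D * Rt * D) * c * (Rt * (D * G))‖
          ≤ ‖(D * Rt * D) * c‖ * ‖Rt * (D * G)‖ := norm_mul_le _ _
        _ ≤ (‖D * Rt * D‖ * ‖c‖) * ‖Rt * (D * G)‖ :=
            mul_le_mul_of_nonneg_right (norm_mul_le _ _) (norm_nonneg _)
        _ ≤ (1 * ‖c‖) * ((1 + t^2) ^ (-(1/2:ℝ) - r)) := by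
            apply mul_le_mul (mul_le_mul_of_nonneg_right nP1 (norm_nonneg _)) nQ1
              (norm_nonneg _) (by positivity)
        _ = ‖c‖ * (1 + t^2) ^ (-(1/2:ℝ) - r) := by ring
    have hterm2 : ‖(D * Rt) * c * (D * (Rt * (D * G)))‖
        ≤ (1/2) * ‖c‖ * (1 + t^2) ^ (-(1/2:ℝ) - r) := by
      calc ‖(D * Rt) * c * (D * (Rt * (D * G)))‖
          ≤ ‖(D * Rt) * c‖ * ‖D * (Rt * (D * G))‖ := norm_mul_le _ _
        _ ≤ (‖D * Rt‖ * ‖c‖) * ‖D * (Rt * (D * G))‖ :=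
            mul_le_mul_of_nonneg_right (norm_mul_le _ _) (norm_nonneg _)
        _ ≤ ((1/2) * (1 + t^2) ^ (-(1/2):ℝ) * ‖c‖) * ((1 + t^2) ^ (-r)) := by
            apply mul_le_mul (mul_le_mul_of_nonneg_right nP2 (norm_nonneg _)) nQ2
              (norm_nonneg _) (by positivity)
        _ = (1/2) * ‖c‖ * ((1 + t^2) ^ (-(1/2:ℝ)) * (1 + t^2) ^ (-r)) := by ring
        _ = (1/2) * ‖c‖ * (1 + t^2) ^ (-(1/2:ℝ) - r) := by rw [hwsplit]
    calc ‖L (R t)‖ = ‖D * (Rt * a - a * Rt) * (D * G)‖ := by rw [hLap]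
      _ = ‖(D * Rt * D) * c * (Rt * (D * G)) + (D * Rt) * c * (D * (Rt * (D * G)))‖ := by
          rw [hTt, norm_neg]
      _ ≤ ‖(D * Rt * D) * c * (Rt * (D * G))‖ + ‖(D * Rt) * c * (D * (Rt * (D * G)))‖ :=
          norm_add_le _ _
      _ ≤ ‖c‖ * (1 + t^2) ^ (-(1/2:ℝ) - r) + (1/2) * ‖c‖ * (1 + t^2) ^ (-(1/2:ℝ) - r) :=
          add_le_add hterm1 hterm2
      _ ≤ 2 * ‖c‖ * (1 + t^2) ^ (-(1/2:ℝ) - r) := by nlinarith [norm_nonneg c, hw]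
  -- main assembly
  have hmain : D * (F * a - a * F) * (D * G) = Real.pi⁻¹ • ∫ t : ℝ, L (R t) := by
    have h1 : D * (F * a - a * F) * (D * G) = L F := (hLap F).symm
    have h2 : F = Real.pi⁻¹ • (Real.pi • F) := (inv_smul_smul₀ (ne_of_gt hπ) F).symm
    rw [h1, h2, hFrep, L.map_smul, ContinuousLinearMap.integral_comp_comm L hRint]
  have hbint : Integrable (fun t : ℝ => 2 * ‖c‖ * (1 + t^2) ^ (-(1/2:ℝ) - r)) volume :=
    (stmt19_intg hβ).const_mul _
  have hnorm : ‖D * (F * a - a * F) * (D * G)‖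
      ≤ Real.pi⁻¹ * ∫ t : ℝ, 2 * ‖c‖ * (1 + t^2) ^ (-(1/2:ℝ) - r) := by
    rw [hmain, norm_smul, Real.norm_eq_abs, abs_of_nonneg (le_of_lt (inv_pos.mpr hπ))]
    apply mul_le_mul_of_nonneg_left _ (le_of_lt (inv_pos.mpr hπ))
    exact norm_integral_le_of_norm_le hbint (ae_of_all _ key)
  calc ‖D * (F * a - a * F) * (D * G)‖
      ≤ Real.pi⁻¹ * ∫ t : ℝ, 2 * ‖c‖ * (1 + t^2) ^ (-(1/2:ℝ) - r) := hnorm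
    _ = 2 * ‖c‖ / Real.pi * ∫ t : ℝ, (1 + t^2) ^ (-(1/2:ℝ) - r) := by
        rw [integral_const_mul]; ring
    _ = 2 * ‖c‖ / Real.pi *
        ∫ l in Ioi (0:ℝ), l ^ (-(1/2 : ℝ)) * (1 + l) ^ (-(1/2 : ℝ) - r) := by
        rw [stmt19_subst hβ]
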